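/- Let ι be a nonempty finite type, let p : ι → ℝ × ℝ be a family of points in the plane, and let D, Δ ∈ ℝ. If there exists a point x in the convex hull of the range of p whose first coordinate satisfies x₁ ≤ D and whose second coordinate satisfies x₂ ≥ Δ, then there exist indices i, j ∈ ι and a real number α with 0 ≤ α ≤ 1 such that the point α • p i + (1 − α) • p j has first coordinate ≤ D and second coordinate ≥ Δ. -/

import Mathlib

open Set

lemma aux_seg {ι : Type*} (p : ι → ℝ × ℝ) (z : ℝ × ℝ)
    (hz : z ∈ convexHull ℝ (Set.range p))
    (hzi : z ∉ interior (convexHull ℝ (Set.range p))) :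
    ∃ (i j : ι) (α : ℝ), 0 ≤ α ∧ α ≤ 1 ∧ z = α • p i + (1 - α) • p j := by
  classical
  rw [convexHull_eq_union] at hz
  simp only [Set.mem_iUnion, exists_prop] at hz
  obtain ⟨t, hts, hind, hzt⟩ := hz
  rw [Finset.convexHull_eq] at hzt
  obtain ⟨w, hw0, hw1, hwz⟩ := hzt
  rw [Finset.centerMass_eq_of_sum_1 _ _ hw1] at hwz
  -- restrict to the support
  set t' : Finset (ℝ × ℝ) := t.filter (fun y => w y ≠ 0) with ht'
  have hsub : t' ⊆ t := Finset.filter_subset _ _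
  have hw1' : ∑ y ∈ t', w y = 1 := by
    rw [ht', Finset.sum_filter_ne_zero]; exact hw1
  have hwz' : ∑ y ∈ t', w y • (id y) = z := by
    rw [← hwz, ht']
    exact Finset.sum_filter_of_ne (fun y _ h hw => h (by rw [hw, zero_smul]))
  simp only [id] at hwz'
  have hw0' : ∀ y ∈ t', 0 < w y := by
    intro y hy
    rcases Finset.mem_filter.mp hy with ⟨hyt, hwy⟩
    exact lt_of_le_of_ne (hw0 y hyt) (Ne.symm hwy)
  have hts' : (↑t' : Set (ℝ × ℝ)) ⊆ Set.range p := fun y hy => hts (hsub hy)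
  have hind' : AffineIndependent ℝ ((↑) : ↥t' → ℝ × ℝ) :=
    hind.mono (by exact_mod_cast Finset.coe_subset.mpr hsub)
  have hcard : t'.card ≤ 3 := by
    have h1 := hind'.card_le_finrank_succ
    rw [Fintype.card_coe] at h1
    have h2 : Module.finrank ℝ (vectorSpan ℝ (Set.range ((↑) : ↥t' → ℝ × ℝ))) ≤
        Module.finrank ℝ (ℝ × ℝ) := Submodule.finrank_le _
    have h3 : Module.finrank ℝ (ℝ × ℝ) = 2 := by
      simp [Module.finrank_self]
    omega
  -- case on cardinality
  rcases Nat.lt_or_ge t'.card 3 with hc | hc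
  · -- at most two points
    interval_cases hcc : t'.card
    · exfalso
      rw [Finset.card_eq_zero.mp hcc] at hw1'
      simp at hw1'
    · obtain ⟨a, ha⟩ := Finset.card_eq_one.mp hcc
      rw [ha] at hw1' hwz' hts'
      simp at hw1' hwz'
      obtain ⟨i, hi⟩ := hts' (by simp : a ∈ (↑({a} : Finset (ℝ × ℝ)) : Set (ℝ × ℝ)))
      refine ⟨i, i, 1, zero_le_one, le_refl 1, ?_⟩
      rw [hi, ← hwz', hw1']
      simp
    · obtain ⟨a, b, hab, h347⟩ := Finset.card_eq_two.mp hcc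
      rw [h347] at hw1' hwz' hts'
      rw [Finset.sum_pair hab] at hw1' hwz'
      obtain ⟨i, hi⟩ := hts' (by simp : a ∈ (↑({a, b} : Finset (ℝ × ℝ)) : Set (ℝ × ℝ)))
      obtain ⟨j, hj⟩ := hts' (by simp : b ∈ (↑({a, b} : Finset (ℝ × ℝ)) : Set (ℝ × ℝ)))
      have hwa : 0 ≤ w a := hw0 a (hsub (h347 ▸ (by simp)))
      have hwb : 0 ≤ w b := hw0 b (hsub (h347 ▸ (by simp)))
      refine ⟨i, j, w a, hwa, by linarith, ?_⟩
      rw [hi, hj, ← hwz']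
      have : 1 - w a = w b := by linarith
      rw [this]
  · -- three points: contradiction with non-interiority
    exfalso
    have hcard3 : t'.card = 3 := le_antisymm hcard hc
    have htop : affineSpan ℝ (Set.range ((↑) : ↥t' → ℝ × ℝ)) = ⊤ := by
      rw [hind'.affineSpan_eq_top_iff_card_eq_finrank_add_one]
      simp [Fintype.card_coe, hcard3]
    let b : AffineBasis ↥t' ℝ (ℝ × ℝ) := ⟨_, hind', htop⟩
    have hrange : Set.range (b : ↥t' → ℝ × ℝ) = ↑t' := Subtype.range_coe
    -- z as an affine combination
    have hcoe : (b : ↥t' → ℝ × ℝ) = ((↑) : ↥t' → ℝ × ℝ) := rfl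
    have hz' : (Finset.univ.affineCombination ℝ (b : ↥t' → ℝ × ℝ)
        (fun i => w ↑i)) = z := by
      rw [hcoe]
      rw [affineCombination_eq_centerMass (by rw [← Finset.sum_attach t' w] at hw1'; exact hw1'),
        Finset.centerMass_eq_of_sum_1 _ _ (by rw [← Finset.sum_attach t' w] at hw1'; exact hw1')]
      rw [← hwz', ← Finset.sum_attach t' (fun y => w y • y)]
      rfl
    have hzint : z ∈ interior (convexHull ℝ (Set.range (b : ↥t' → ℝ × ℝ))) := by
      rw [b.interior_convexHull]
      intro i
      rw [← hz', b.coord_apply_combination_of_mem (Finset.mem_univ i)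
        (by rw [← Finset.sum_attach t' w] at hw1'; exact hw1')]
      exact hw0' _ i.2
    have hsubr : Set.range (b : ↥t' → ℝ × ℝ) ⊆ Set.range p := by
      rw [hrange]; exact hts'
    exact hzi (interior_mono (convexHull_mono hsubr) hzint)

theorem stmt_0 {ι : Type*} [Fintype ι] [Nonempty ι] (p : ι → ℝ × ℝ) (D Δ : ℝ)
    (h : ∃ x ∈ convexHull ℝ (Set.range p), x.1 ≤ D ∧ x.2 ≥ Δ) :
    ∃ (i j : ι) (α : ℝ), 0 ≤ α ∧ α ≤ 1 ∧
      (α • p i + (1 - α) • p j).1 ≤ D ∧ (α • p i + (1 - α) • p j).2 ≥ Δ := by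
  classical
  obtain ⟨x, hx, hx1, hx2⟩ := h
  set P := convexHull ℝ (Set.range p) with hP
  have hPc : IsCompact P := (Set.finite_range p).isCompact_convexHull ℝ
  set d : ℝ × ℝ := (-1, 1) with hd
  have hnd : ‖d‖ = 1 := by simp [hd, Prod.norm_def]
  set A : Set ℝ := {t : ℝ | 0 ≤ t ∧ x + t • d ∈ P} with hA
  have hA0 : (0:ℝ) ∈ A := ⟨le_refl 0, by simpa using hx⟩
  have hAbdd : BddAbove A := by
    obtain ⟨C, hC⟩ := hPc.isBounded.subset_closedBall 0
    refine ⟨C + ‖x‖, fun t ht => ?_⟩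
    have h1 : ‖x + t • d‖ ≤ C := by simpa using hC ht.2
    have h2 : ‖t • d‖ ≤ ‖x + t • d‖ + ‖x‖ := by
      have e : t • d = (x + t • d) - x := by abel
      conv_lhs => rw [e]
      exact norm_sub_le (x + t • d) x
    have h3 : ‖t • d‖ = t := by simp [norm_smul, hnd, Real.norm_eq_abs, abs_of_nonneg ht.1]
    linarith
  have hAclosed : IsClosed A := by
    have : A = Set.Ici 0 ∩ (fun t : ℝ => x + t • d) ⁻¹' P := rfl
    rw [this]
    exact isClosed_Ici.inter (hPc.isClosed.preimage (by fun_prop))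
  set t0 := sSup A with ht0def
  have ht0 : t0 ∈ A := hAclosed.csSup_mem ⟨0, hA0⟩ hAbdd
  set z := x + t0 • d with hzdef
  have hznotint : z ∉ interior P := by
    intro hzint
    obtain ⟨ε, hε, hball⟩ := Metric.isOpen_iff.mp isOpen_interior z hzint
    have hmem : t0 + ε/2 ∈ A := by
      constructor
      · linarith [ht0.1]
      · apply interior_subset
        apply hball
        rw [Metric.mem_ball]
        have : x + (t0 + ε/2) • d - z = (ε/2) • d := by
          rw [hzdef]; module
        rw [dist_eq_norm, this, norm_smul, hnd]
        simp [abs_of_pos hε]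
        linarith
    have := le_csSup hAbdd hmem
    linarith
  obtain ⟨i, j, α, h0, h1, hzeq⟩ := aux_seg p z ht0.2 hznotint
  refine ⟨i, j, α, h0, h1, ?_, ?_⟩ <;> rw [← hzeq, hzdef, hd] <;> simp <;> linarith [ht0.1]
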